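/- The number of permutations of {1, ..., n} that contain no decreasing subsequence of length 3 (equivalently, avoid the pattern 321) equals the n-th Catalan number (2n)! / (n!·(n+1)!). -/

import Mathlib

open Finset

namespace Stmt6

variable {n : ℕ}


lemma card_pi_lt (π : Equiv.Perm (Fin n)) (v : Fin n) :
    (univ.filter (fun k => π k < v)).card = (v : ℕ) := by
  have : (univ.filter (fun k => π k < v)) = (Finset.Iio v).image π.symm := by
    ext k
    simp [Finset.mem_image]
    constructor
    · intro h; exact ⟨π k, h, by simp⟩
    · rintro ⟨u, hu, rfl⟩; simpa using hu
  rw [this, Finset.card_image_of_injective _ π.symm.injective, Fin.card_Iio]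

lemma card_pi_gt (π : Equiv.Perm (Fin n)) (v : Fin n) :
    (univ.filter (fun k => v < π k)).card = n - 1 - (v : ℕ) := by
  have : (univ.filter (fun k => v < π k)) = (Finset.Ioi v).image π.symm := by
    ext k
    simp [Finset.mem_image]
    constructor
    · intro h; exact ⟨π k, h, by simp⟩
    · rintro ⟨u, hu, rfl⟩; simpa using hu
  rw [this, Finset.card_image_of_injective _ π.symm.injective, Fin.card_Ioi]

section
variable {π : Equiv.Perm (Fin n)}
  (hav : ¬ ∃ i j k : Fin n, i < j ∧ j < k ∧ π j < π i ∧ π k < π j)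
include hav

/-- excedance values appear in increasing order -/
lemma exc_mono {i j : Fin n} (hij : i < j) (hj : j < π j) : π i < π j := by
  rcases lt_or_ge (π i) (π j) with h | h
  · exact h
  have hlt : π j < π i :=
    lt_of_le_of_ne h fun e => absurd (π.injective e.symm) (Fin.ne_of_lt hij)
  -- find k > j with π k < π j
  have hk : ∃ k, j < k ∧ π k < π j := by
    by_contra hc
    push_neg at hc
    have hsub : (univ.filter (fun k => π k < π j)) ⊆ (Finset.Iio j).erase i := by
      intro k hk
      simp only [mem_filter, mem_univ, true_and] at hk
      have hkj : k ≠ j := fun e => by subst e; exact absurd hk (lt_irrefl _)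
      have hki : k ≠ i := fun e => by subst e; exact absurd hk (not_lt_of_gt hlt)
      have : k < j := lt_of_le_of_ne (le_of_not_gt fun h' => absurd hk (not_lt_of_ge (hc k h'))) hkj
      simp [Finset.mem_erase, hki, Finset.mem_Iio, this]
    have hcard := Finset.card_le_card hsub
    rw [card_pi_lt, Finset.card_erase_of_mem (by simp [Finset.mem_Iio, hij]), Fin.card_Iio] at hcard
    have h1 : (j : ℕ) < (π j : ℕ) := hj
    omega
  obtain ⟨k, hjk, hk⟩ := hk
  exact absurd ⟨i, j, k, hij, hjk, hlt, hk⟩ hav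

/-- non-excedance values appear in increasing order -/
lemma nexc_mono {i j : Fin n} (hij : i < j) (hi : π i ≤ i) : π i < π j := by
  rcases lt_or_ge (π i) (π j) with h | h
  · exact h
  have hlt : π j < π i :=
    lt_of_le_of_ne h fun e => absurd (π.injective e.symm) (Fin.ne_of_lt hij)
  have hk : ∃ k, k < i ∧ π i < π k := by
    by_contra hc
    push_neg at hc
    have hsub : (univ.filter (fun k => π i < π k)) ⊆ (Finset.Ioi i).erase j := by
      intro k hk
      simp only [mem_filter, mem_univ, true_and] at hk
      have hki : k ≠ i := fun e => by subst e; exact absurd hk (lt_irrefl _)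
      have hkj : k ≠ j := fun e => by subst e; exact absurd hk (not_lt_of_gt hlt)
      have : i < k := lt_of_le_of_ne (le_of_not_gt fun h' => absurd hk (not_lt_of_ge (hc k h'))) (Ne.symm hki)
      simp [Finset.mem_erase, hkj, Finset.mem_Ioi, this]
    have hcard := Finset.card_le_card hsub
    rw [card_pi_gt, Finset.card_erase_of_mem (by simp [Finset.mem_Ioi, hij]), Fin.card_Ioi] at hcard
    have h1 : (π i : ℕ) ≤ (i : ℕ) := hi
    have h2 : (i : ℕ) < (j : ℕ) := hij
    have h3 : (j : ℕ) < n := j.2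
    omega
  obtain ⟨k, hki, hk⟩ := hk
  exact absurd ⟨k, i, j, hki, hij, hk, hlt⟩ hav

end



-- index counting lemmas for orderEmbOfFin
lemma filter_lt_emb (s : Finset (Fin n)) {k : ℕ} (h : s.card = k) (r : Fin k) :
    (s.filter (· < s.orderEmbOfFin h r)).card = (r : ℕ) := by
  have himg : s.filter (· < s.orderEmbOfFin h r)
      = (Finset.Iio r).image (s.orderEmbOfFin h) := by
    ext x
    simp only [mem_filter, mem_image, Finset.mem_Iio]
    constructor
    · rintro ⟨hxs, hxlt⟩
      have : x ∈ Set.range (s.orderEmbOfFin h) := by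
        rw [Finset.range_orderEmbOfFin]; exact hxs
      obtain ⟨r', rfl⟩ := this
      exact ⟨r', (s.orderEmbOfFin h).lt_iff_lt.mp hxlt, rfl⟩
    · rintro ⟨r', hr', rfl⟩
      exact ⟨Finset.orderEmbOfFin_mem _ _ _, (s.orderEmbOfFin h).lt_iff_lt.mpr hr'⟩
  rw [himg, Finset.card_image_of_injective _ (s.orderEmbOfFin h).injective, Fin.card_Iio]

lemma filter_le_emb (s : Finset (Fin n)) {k : ℕ} (h : s.card = k) (r : Fin k) :
    (s.filter (· ≤ s.orderEmbOfFin h r)).card = (r : ℕ) + 1 := by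
  have : s.filter (· ≤ s.orderEmbOfFin h r)
      = insert (s.orderEmbOfFin h r) (s.filter (· < s.orderEmbOfFin h r)) := by
    ext x
    simp only [mem_filter, mem_insert]
    constructor
    · rintro ⟨hxs, hxle⟩
      rcases eq_or_lt_of_le hxle with he | hl
      · exact Or.inl he
      · exact Or.inr ⟨hxs, hl⟩
    · rintro (rfl | ⟨hxs, hlt⟩)
      · exact ⟨Finset.orderEmbOfFin_mem _ _ _, le_refl _⟩
      · exact ⟨hxs, le_of_lt hlt⟩
  rw [this, Finset.card_insert_of_notMem (by simp), filter_lt_emb]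

lemma filter_card_compl (s : Finset (Fin n)) (p : Fin n → Prop) [DecidablePred p] :
    (s.filter p).card + (sᶜ.filter p).card = (univ.filter p).card := by
  rw [← Finset.card_union_of_disjoint
    (Finset.disjoint_filter_filter disjoint_compl_right), ← Finset.filter_union,
    Finset.union_compl]

lemma card_filter_le_univ (x : Fin n) :
    (univ.filter (· ≤ x)).card = (x : ℕ) + 1 := by
  rw [show univ.filter (· ≤ x) = Finset.Iic x by ext y; simp, Fin.card_Iic]


lemma emb_symm_apply (s : Finset (Fin n)) {k : ℕ} (h : s.card = k) (x : Fin n) (hx : x ∈ s) :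
    s.orderEmbOfFin h ((s.orderIsoOfFin h).symm ⟨x, hx⟩) = x := by
  have h2 := (s.orderIsoOfFin h).apply_symm_apply ⟨x, hx⟩
  have h3 := congrArg Subtype.val h2
  rwa [Finset.coe_orderIsoOfFin_apply] at h3

lemma symm_emb_apply (s : Finset (Fin n)) {k : ℕ} (h : s.card = k) (r : Fin k)
    (hm : s.orderEmbOfFin h r ∈ s) :
    (s.orderIsoOfFin h).symm ⟨s.orderEmbOfFin h r, hm⟩ = r := by
  have : (⟨s.orderEmbOfFin h r, hm⟩ : {x // x ∈ s}) = s.orderIsoOfFin h r :=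
    Subtype.ext (by rw [Finset.coe_orderIsoOfFin_apply])
  rw [this, OrderIso.symm_apply_apply]

/-- the permutation built from a pair of finsets -/
def build (A B : Finset (Fin n)) (hB : B.card = A.card) (hBc : Bᶜ.card = Aᶜ.card) :
    Equiv.Perm (Fin n) where
  toFun i := if h : i ∈ A then (B.orderEmbOfFin hB) ((A.orderIsoOfFin rfl).symm ⟨i, h⟩)
    else (Bᶜ.orderEmbOfFin hBc) ((Aᶜ.orderIsoOfFin rfl).symm ⟨i, by simpa using h⟩)
  invFun j := if h : j ∈ B then (A.orderEmbOfFin rfl) ((B.orderIsoOfFin hB).symm ⟨j, h⟩)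
    else (Aᶜ.orderEmbOfFin rfl) ((Bᶜ.orderIsoOfFin hBc).symm ⟨j, by simpa using h⟩)
  left_inv i := by
    dsimp only
    by_cases h : i ∈ A
    · rw [dif_pos h, dif_pos (Finset.orderEmbOfFin_mem B hB _),
        symm_emb_apply B hB _ (Finset.orderEmbOfFin_mem B hB _), emb_symm_apply]
    · have h' : i ∈ Aᶜ := Finset.mem_compl.mpr h
      have hmem := Finset.orderEmbOfFin_mem Bᶜ hBc ((Aᶜ.orderIsoOfFin rfl).symm ⟨i, h'⟩)
      rw [dif_neg h, dif_neg (Finset.mem_compl.mp hmem),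
        symm_emb_apply Bᶜ hBc _ hmem, emb_symm_apply]
  right_inv j := by
    dsimp only
    by_cases h : j ∈ B
    · rw [dif_pos h, dif_pos (Finset.orderEmbOfFin_mem A rfl _),
        symm_emb_apply A rfl _ (Finset.orderEmbOfFin_mem A rfl _), emb_symm_apply]
    · have h' : j ∈ Bᶜ := Finset.mem_compl.mpr h
      have hmem := Finset.orderEmbOfFin_mem Aᶜ rfl ((Bᶜ.orderIsoOfFin hBc).symm ⟨j, h'⟩)
      rw [dif_neg h, dif_neg (Finset.mem_compl.mp hmem),
        symm_emb_apply Aᶜ rfl _ hmem, emb_symm_apply]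

section
variable {A B : Finset (Fin n)} {hB : B.card = A.card} {hBc : Bᶜ.card = Aᶜ.card}

lemma build_apply_mem {i : Fin n} (h : i ∈ A) : build A B hB hBc i ∈ B := by
  show (if h : i ∈ A then _ else _) ∈ B
  rw [dif_pos h]; exact Finset.orderEmbOfFin_mem B hB _

lemma build_apply_not_mem {i : Fin n} (h : i ∉ A) : build A B hB hBc i ∈ Bᶜ := by
  show (if h : i ∈ A then _ else _) ∈ Bᶜ
  rw [dif_neg h]; exact Finset.orderEmbOfFin_mem Bᶜ hBc _

lemma build_sm {i j : Fin n} (hij : i < j)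
    (h : (i ∈ A ∧ j ∈ A) ∨ (i ∉ A ∧ j ∉ A)) :
    build A B hB hBc i < build A B hB hBc j := by
  rcases h with ⟨hi, hj⟩ | ⟨hi, hj⟩
  · show (if h : i ∈ A then _ else _) < (if h : j ∈ A then _ else _)
    rw [dif_pos hi, dif_pos hj]
    exact (B.orderEmbOfFin hB).strictMono
      ((A.orderIsoOfFin rfl).symm.strictMono (Subtype.mk_lt_mk.mpr hij))
  · show (if h : i ∈ A then _ else _) < (if h : j ∈ A then _ else _)
    rw [dif_neg hi, dif_neg hj]
    exact (Bᶜ.orderEmbOfFin hBc).strictMono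
      ((Aᶜ.orderIsoOfFin rfl).symm.strictMono (Subtype.mk_lt_mk.mpr hij))

lemma build_avoids :
    ¬ ∃ i j k : Fin n, i < j ∧ j < k ∧
      build A B hB hBc j < build A B hB hBc i ∧ build A B hB hBc k < build A B hB hBc j := by
  rintro ⟨i, j, k, hij, hjk, h1, h2⟩
  by_cases hi : i ∈ A <;> by_cases hj : j ∈ A <;> by_cases hk : k ∈ A
  · exact absurd (build_sm hij (Or.inl ⟨hi, hj⟩)) (not_lt_of_gt h1)
  · exact absurd (build_sm hij (Or.inl ⟨hi, hj⟩)) (not_lt_of_gt h1)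
  · exact absurd (build_sm (hij.trans hjk) (Or.inl ⟨hi, hk⟩)) (not_lt_of_gt (h2.trans h1))
  · exact absurd (build_sm hjk (Or.inr ⟨hj, hk⟩)) (not_lt_of_gt h2)
  · exact absurd (build_sm hjk (Or.inl ⟨hj, hk⟩)) (not_lt_of_gt h2)
  · exact absurd (build_sm (hij.trans hjk) (Or.inr ⟨hi, hk⟩)) (not_lt_of_gt (h2.trans h1))
  · exact absurd (build_sm hij (Or.inr ⟨hi, hj⟩)) (not_lt_of_gt h1)
  · exact absurd (build_sm hij (Or.inr ⟨hi, hj⟩)) (not_lt_of_gt h1)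

variable (hdom : ∀ x : Fin n, (B.filter (· ≤ x)).card ≤ (A.filter (· < x)).card)
include hdom

lemma lt_build {i : Fin n} (h : i ∈ A) : i < build A B hB hBc i := by
  set r := (A.orderIsoOfFin rfl).symm ⟨i, h⟩ with hr
  have hie : A.orderEmbOfFin rfl r = i := emb_symm_apply A rfl i h
  have hbe : build A B hB hBc i = B.orderEmbOfFin hB r := by
    show (if h : i ∈ A then _ else _) = _
    rw [dif_pos h]
  by_contra hle
  push_neg at hle
  have h1 : (B.filter (· ≤ B.orderEmbOfFin hB r)).card ≤ (B.filter (· ≤ i)).card := by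
    apply Finset.card_le_card
    intro x hx
    simp only [mem_filter] at hx ⊢
    exact ⟨hx.1, le_trans hx.2 (hbe ▸ hle)⟩
  rw [filter_le_emb] at h1
  have h2 : (A.filter (· < i)).card = (r : ℕ) := by
    conv_lhs => rw [← hie]
    exact filter_lt_emb A rfl r
  have h3 := hdom i
  omega

lemma build_le {i : Fin n} (h : i ∉ A) : build A B hB hBc i ≤ i := by
  have h' : i ∈ Aᶜ := Finset.mem_compl.mpr h
  set r := (Aᶜ.orderIsoOfFin rfl).symm ⟨i, h'⟩ with hr
  have hie : Aᶜ.orderEmbOfFin rfl r = i := emb_symm_apply Aᶜ rfl i h'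
  have hbe : build A B hB hBc i = Bᶜ.orderEmbOfFin hBc r := by
    show (if h : i ∈ A then _ else _) = _
    rw [dif_neg h]
  by_contra hlt
  push_neg at hlt
  have c1 : (Bᶜ.filter (· ≤ i)).card ≤ (r : ℕ) := by
    have hsub : Bᶜ.filter (· ≤ i) ⊆ Bᶜ.filter (· < Bᶜ.orderEmbOfFin hBc r) := by
      intro x hx
      simp only [mem_filter] at hx ⊢
      exact ⟨hx.1, lt_of_le_of_lt hx.2 (hbe ▸ hlt)⟩
    have := Finset.card_le_card hsub
    rwa [filter_lt_emb] at this
  have c2 : (Aᶜ.filter (· ≤ i)).card = (r : ℕ) + 1 := by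
    conv_lhs => rw [← hie]
    exact filter_le_emb Aᶜ rfl r
  have c3 := filter_card_compl A (· ≤ i)
  have c4 := filter_card_compl B (· ≤ i)
  have c5 : A.filter (· < i) = A.filter (· ≤ i) := by
    ext x
    simp only [mem_filter]
    constructor
    · rintro ⟨hx, hlt'⟩; exact ⟨hx, le_of_lt hlt'⟩
    · rintro ⟨hx, hle'⟩
      refine ⟨hx, lt_of_le_of_ne hle' fun e => h (e ▸ hx)⟩
  have c6 := card_filter_le_univ i
  have h3 := hdom i
  rw [c5] at h3
  omega

end

/-- the excedance position set -/
def excA (π : Equiv.Perm (Fin n)) : Finset (Fin n) := univ.filter (fun i => i < π i)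

/-- the excedance value set -/
def excB (π : Equiv.Perm (Fin n)) : Finset (Fin n) := (excA π).image π

lemma excB_card (π : Equiv.Perm (Fin n)) : (excB π).card = (excA π).card :=
  Finset.card_image_of_injective _ π.injective

lemma excB_compl_card (π : Equiv.Perm (Fin n)) : (excB π)ᶜ.card = (excA π)ᶜ.card := by
  rw [Finset.card_compl, Finset.card_compl, excB_card]

lemma mem_excB_iff (π : Equiv.Perm (Fin n)) {p : Fin n} : π p ∈ excB π ↔ p ∈ excA π := by
  constructor
  · intro hp
    obtain ⟨q, hq, he⟩ := Finset.mem_image.mp hp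
    rwa [← π.injective he]
  · intro hp
    exact Finset.mem_image_of_mem _ hp

lemma dom_exc (π : Equiv.Perm (Fin n)) :
    ∀ x : Fin n, ((excB π).filter (· ≤ x)).card ≤ ((excA π).filter (· < x)).card := by
  intro x
  apply Finset.card_le_card_of_injOn π.symm
  · intro v hv
    simp only [Finset.mem_coe, mem_filter] at hv ⊢
    obtain ⟨hvB, hvx⟩ := hv
    obtain ⟨p, hp, he⟩ := Finset.mem_image.mp hvB
    subst he
    rw [Equiv.symm_apply_apply]
    simp only [excA, mem_filter, mem_univ, true_and] at hp ⊢
    exact ⟨hp, lt_of_lt_of_le hp hvx⟩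
  · exact fun a _ b _ h => π.symm.injective h

section
variable {π : Equiv.Perm (Fin n)}
  (hav : ¬ ∃ i j k : Fin n, i < j ∧ j < k ∧ π j < π i ∧ π k < π j)
include hav

lemma build_exc_eq :
    build (excA π) (excB π) (excB_card π) (excB_compl_card π) = π := by
  have hA : ∀ i : Fin n, i ∈ excA π ↔ i < π i := by
    intro i; simp [excA]
  apply Equiv.ext
  intro i
  by_cases h : i ∈ excA π
  · have hF : (fun r : Fin (excA π).card => π ((excA π).orderEmbOfFin rfl r))
        = (excB π).orderEmbOfFin (excB_card π) := by
      apply Finset.orderEmbOfFin_unique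
      · intro r
        exact Finset.mem_image_of_mem _ (Finset.orderEmbOfFin_mem _ _ _)
      · intro r r' hrr
        have h1 : (excA π).orderEmbOfFin rfl r < (excA π).orderEmbOfFin rfl r' :=
          ((excA π).orderEmbOfFin rfl).strictMono hrr
        have h2 : (excA π).orderEmbOfFin rfl r' ∈ excA π := Finset.orderEmbOfFin_mem _ _ _
        exact exc_mono hav h1 ((hA _).mp h2)
    have hbe : build (excA π) (excB π) (excB_card π) (excB_compl_card π) i
        = (excB π).orderEmbOfFin (excB_card π) (((excA π).orderIsoOfFin rfl).symm ⟨i, h⟩) := by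
      show (if h : i ∈ excA π then _ else _) = _
      rw [dif_pos h]
    rw [hbe, ← hF]
    dsimp only
    rw [emb_symm_apply]
  · have h' : i ∈ (excA π)ᶜ := Finset.mem_compl.mpr h
    have hF : (fun r : Fin (excA π)ᶜ.card => π ((excA π)ᶜ.orderEmbOfFin rfl r))
        = (excB π)ᶜ.orderEmbOfFin (excB_compl_card π) := by
      apply Finset.orderEmbOfFin_unique
      · intro r
        have hm := Finset.orderEmbOfFin_mem (excA π)ᶜ rfl r
        rw [Finset.mem_compl] at hm ⊢
        exact fun hb => hm ((mem_excB_iff π).mp hb)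
      · intro r r' hrr
        have h1 : (excA π)ᶜ.orderEmbOfFin rfl r < (excA π)ᶜ.orderEmbOfFin rfl r' :=
          ((excA π)ᶜ.orderEmbOfFin rfl).strictMono hrr
        have h2 : (excA π)ᶜ.orderEmbOfFin rfl r ∈ (excA π)ᶜ := Finset.orderEmbOfFin_mem _ _ _
        rw [Finset.mem_compl, hA] at h2
        push_neg at h2
        exact nexc_mono hav h1 h2
    have hbe : build (excA π) (excB π) (excB_card π) (excB_compl_card π) i
        = (excB π)ᶜ.orderEmbOfFin (excB_compl_card π) (((excA π)ᶜ.orderIsoOfFin rfl).symm ⟨i, h'⟩) := by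
      show (if h : i ∈ excA π then _ else _) = _
      rw [dif_neg h]
    rw [hbe, ← hF]
    dsimp only
    rw [emb_symm_apply]

end

section
variable {A B : Finset (Fin n)} {hB : B.card = A.card} {hBc : Bᶜ.card = Aᶜ.card}
variable (hdom : ∀ x : Fin n, (B.filter (· ≤ x)).card ≤ (A.filter (· < x)).card)
include hdom

lemma excA_build : excA (build A B hB hBc) = A := by
  ext i
  simp only [excA, mem_filter, mem_univ, true_and]
  constructor
  · intro hlt
    by_contra hi
    exact absurd hlt (not_lt_of_ge (build_le hdom hi))
  · exact lt_build hdom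

lemma excB_build : excB (build A B hB hBc) = B := by
  have hsub : excB (build A B hB hBc) ⊆ B := by
    intro v hv
    obtain ⟨p, hp, he⟩ := Finset.mem_image.mp hv
    rw [excA_build hdom] at hp
    exact he ▸ build_apply_mem hp
  apply Finset.eq_of_subset_of_card_le hsub
  rw [excB_card, excA_build hdom, hB]

end

/-- pair condition -/
def PairCond (A B : Finset (Fin n)) : Prop :=
  B.card = A.card ∧ ∀ x : Fin n, (B.filter (· ≤ x)).card ≤ (A.filter (· < x)).card

/-- Part 1: the equivalence between 321-avoiding permutations and excedance pairs -/
def avEquivPairs (n : ℕ) :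
    {π : Equiv.Perm (Fin n) //
        ¬ ∃ i j k : Fin n, i < j ∧ j < k ∧ π j < π i ∧ π k < π j} ≃
    {AB : Finset (Fin n) × Finset (Fin n) // PairCond AB.1 AB.2} where
  toFun π := ⟨(excA π.1, excB π.1), excB_card π.1, dom_exc π.1⟩
  invFun AB := ⟨build AB.1.1 AB.1.2 AB.2.1
      (by rw [Finset.card_compl, Finset.card_compl, AB.2.1]), build_avoids⟩
  left_inv π := Subtype.ext (build_exc_eq π.2)
  right_inv AB := Subtype.ext (Prod.ext (excA_build AB.2.2) (excB_build AB.2.2))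


section Part2
open List DyckStep

/-- count of trues below m -/
def cnt (f : ℕ → Bool) (m : ℕ) : ℕ := (List.range m).countP f

lemma cnt_succ (f : ℕ → Bool) (m : ℕ) :
    cnt f (m + 1) = cnt f m + (if f m then 1 else 0) := by
  unfold cnt
  rw [List.range_succ, List.countP_append]
  simp [List.countP_cons]

lemma cnt_le (f : ℕ → Bool) (m : ℕ) : cnt f m ≤ m := by
  have := List.countP_le_length (l := List.range m) (p := f)
  simpa [cnt] using this

lemma cnt_mono (f : ℕ → Bool) {m m' : ℕ} (h : m ≤ m') : cnt f m ≤ cnt f m' := by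
  induction m' with
  | zero => simp_all [cnt]
  | succ k ih =>
    rcases Nat.lt_or_ge m (k+1) with h' | h'
    · have := ih (by omega)
      rw [cnt_succ]
      omega
    · have : m = k + 1 := by omega
      subst this; rfl

/-- the interleaved word -/
def wl (f g : ℕ → Bool) : ℕ → List DyckStep
  | 0 => []
  | m + 1 => wl f g m ++ [if f m then D else U, if g m then U else D]

lemma wl_length (f g : ℕ → Bool) (m : ℕ) : (wl f g m).length = 2 * m := by
  induction m with
  | zero => rfl
  | succ k ih => simp [wl, ih]; omega

lemma wl_count (f g : ℕ → Bool) (m : ℕ) :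
    (wl f g m).count U + cnt f m = m + cnt g m ∧
    (wl f g m).count D + cnt g m = m + cnt f m := by
  induction m with
  | zero => simp [wl, cnt]
  | succ k ih =>
    obtain ⟨ih1, ih2⟩ := ih
    rw [wl, List.count_append, List.count_append, cnt_succ, cnt_succ]
    cases hf : f k <;> cases hg : g k <;>
      simp [List.count_cons, hf, hg] <;> omega

lemma wl_prefix (f g : ℕ → Bool) {m m' : ℕ} (h : m ≤ m') :
    ∃ r, wl f g m' = wl f g m ++ r := by
  induction m' with
  | zero => have : m = 0 := by omega
            subst this; exact ⟨[], by simp [wl]⟩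
  | succ k ih =>
    rcases Nat.lt_or_ge m (k+1) with h' | h'
    · obtain ⟨r, hr⟩ := ih (by omega)
      exact ⟨r ++ [if f k then D else U, if g k then U else D], by
        rw [wl, hr, List.append_assoc]⟩
    · have : m = k + 1 := by omega
      subst this; exact ⟨[], by simp⟩

lemma wl_take_even (f g : ℕ → Bool) {m m' : ℕ} (h : m ≤ m') :
    (wl f g m').take (2 * m) = wl f g m := by
  obtain ⟨r, hr⟩ := wl_prefix f g h
  rw [hr, List.take_append_of_le_length (by rw [wl_length]),
    List.take_of_length_le (by rw [wl_length])]

lemma wl_take_odd (f g : ℕ → Bool) {m m' : ℕ} (h : m < m') :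
    (wl f g m').take (2 * m + 1) = wl f g m ++ [if f m then D else U] := by
  obtain ⟨r, hr⟩ := wl_prefix f g (show m + 1 ≤ m' by omega)
  rw [hr, wl]
  rw [List.append_assoc, List.take_append,
    List.take_of_length_le (by rw [wl_length]; omega), wl_length]
  congr 1
  have : 2 * m + 1 - 2 * m = 1 := by omega
  rw [this]
  rfl

/-- forward: domination implies Dyck prefix condition -/
lemma wl_dyck_prefix {f g : ℕ → Bool} {n : ℕ}
    (hdom : ∀ m < n, cnt f (m + 1) ≤ cnt g m)
    (heq : cnt f n = cnt g n) (i : ℕ) :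
    ((wl f g n).take i).count D ≤ ((wl f g n).take i).count U := by
  have hmono : ∀ m ≤ n, cnt f m ≤ cnt g m := by
    intro m hm
    cases m with
    | zero => simp [cnt]
    | succ k =>
      calc cnt f (k+1) ≤ cnt g k := hdom k (by omega)
      _ ≤ cnt g (k+1) := cnt_mono g (by omega)
  rcases Nat.lt_or_ge i (2 * n) with hi | hi
  · -- i = 2m or 2m+1, m < n resp m ≤ n
    rcases Nat.even_or_odd i with ⟨m, hm⟩ | ⟨m, hm⟩
    · subst hm
      have hmn : m ≤ n := by omega
      rw [show m + m = 2 * m by omega, wl_take_even f g hmn]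
      obtain ⟨h1, h2⟩ := wl_count f g m
      have := hmono m hmn
      have := cnt_le f m
      have := cnt_le g m
      omega
    · subst hm
      have hmn : m < n := by omega
      rw [wl_take_odd f g hmn, List.count_append, List.count_append]
      obtain ⟨h1, h2⟩ := wl_count f g m
      have hd := hdom m hmn
      have hc := cnt_succ f m
      have := hmono m (by omega)
      have := cnt_le f m
      have := cnt_le g m
      cases hf : f m <;> simp [hf, List.count_cons] <;> rw [hf] at hc <;> simp at hc <;> omega
  · rw [List.take_of_length_le (by rw [wl_length]; omega)]
    obtain ⟨h1, h2⟩ := wl_count f g n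
    omega

/-- backward: Dyck prefix condition implies domination -/
lemma wl_dom_of_dyck {f g : ℕ → Bool} {n : ℕ}
    (hpre : ∀ i, ((wl f g n).take i).count D ≤ ((wl f g n).take i).count U)
    {m : ℕ} (hm : m < n) : cnt f (m + 1) ≤ cnt g m := by
  have hc := cnt_succ f m
  cases hf : f m
  · rw [hf] at hc; simp at hc
    have := hpre (2 * m)
    rw [wl_take_even f g (by omega : m ≤ n)] at this
    obtain ⟨h1, h2⟩ := wl_count f g m
    have := cnt_le f m
    have := cnt_le g m
    omega
  · rw [hf] at hc; simp at hc
    have := hpre (2 * m + 1)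
    rw [wl_take_odd f g hm, List.count_append, List.count_append, hf] at this
    simp [List.count_cons] at this
    obtain ⟨h1, h2⟩ := wl_count f g m
    have := cnt_le f m
    have := cnt_le g m
    omega

lemma wl_getElem?_even (f g : ℕ → Bool) {m n : ℕ} (h : m < n) :
    (wl f g n)[2 * m]? = some (if f m then D else U) := by
  obtain ⟨r, hr⟩ := wl_prefix f g (show m + 1 ≤ n by omega)
  rw [hr, wl, List.append_assoc, List.getElem?_append_right (by rw [wl_length]), wl_length]
  simp

lemma wl_getElem?_odd (f g : ℕ → Bool) {m n : ℕ} (h : m < n) :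
    (wl f g n)[2 * m + 1]? = some (if g m then U else D) := by
  obtain ⟨r, hr⟩ := wl_prefix f g (show m + 1 ≤ n by omega)
  rw [hr, wl, List.append_assoc, List.getElem?_append_right (by rw [wl_length]; omega), wl_length]
  have h1 : 2 * m + 1 - 2 * m = 1 := by omega
  rw [h1]
  simp

variable {n : ℕ}

/-- boolean membership indicator -/
def fB (B : Finset (Fin n)) (t : ℕ) : Bool := decide (∃ h : t < n, (⟨t, h⟩ : Fin n) ∈ B)

lemma fB_fin (B : Finset (Fin n)) (t : Fin n) : fB B (t : ℕ) = decide (t ∈ B) := by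
  simp only [fB, decide_eq_decide]
  constructor
  · rintro ⟨h, hm⟩; simpa using hm
  · intro h; exact ⟨t.2, by simpa using h⟩

lemma cnt_fB (B : Finset (Fin n)) (m : ℕ) :
    cnt (fB B) m = (B.filter (fun x : Fin n => (x : ℕ) < m)).card := by
  induction m with
  | zero => simp [cnt]
  | succ k ih =>
    rw [cnt_succ, ih]
    have hsplit : B.filter (fun x : Fin n => (x : ℕ) < k + 1)
        = B.filter (fun x : Fin n => (x : ℕ) < k) ∪ B.filter (fun x : Fin n => (x : ℕ) = k) := by
      ext x
      simp only [Finset.mem_filter, Finset.mem_union]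
      constructor
      · rintro ⟨hx, hlt⟩
        rcases Nat.lt_or_ge (x : ℕ) k with h' | h'
        · exact Or.inl ⟨hx, h'⟩
        · exact Or.inr ⟨hx, by omega⟩
      · rintro (⟨hx, h'⟩ | ⟨hx, h'⟩) <;> exact ⟨hx, by omega⟩
    have hdisj : Disjoint (B.filter (fun x : Fin n => (x : ℕ) < k)) (B.filter (fun x : Fin n => (x : ℕ) = k)) := by
      rw [Finset.disjoint_left]
      intro a ha hb
      simp only [Finset.mem_filter] at ha hb
      omega
    rw [hsplit, Finset.card_union_of_disjoint hdisj]
    congr 1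
    by_cases hk : k < n
    · by_cases hB : (⟨k, hk⟩ : Fin n) ∈ B
      · have h1 : fB B k = true := by simp [fB]; exact ⟨hk, hB⟩
        have h2 : B.filter (fun x : Fin n => (x : ℕ) = k) = {⟨k, hk⟩} := by
          ext x
          simp only [Finset.mem_filter, Finset.mem_singleton]
          constructor
          · rintro ⟨hx, h'⟩; exact Fin.ext h'
          · rintro rfl; exact ⟨hB, rfl⟩
        rw [h1, h2]; simp
      · have h1 : fB B k = false := by
          simp only [fB, decide_eq_false_iff_not]
          rintro ⟨h, hm⟩; exact hB hm
        have h2 : B.filter (fun x : Fin n => (x : ℕ) = k) = ∅ := by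
          ext x
          simp only [Finset.mem_filter, Finset.notMem_empty, iff_false]
          rintro ⟨hx, h'⟩
          exact hB (by rwa [show (⟨k, hk⟩ : Fin n) = x from Fin.ext h'.symm])
        rw [h1, h2]; simp
    · have h1 : fB B k = false := by
        simp only [fB, decide_eq_false_iff_not]
        rintro ⟨h, hm⟩; exact hk h
      have h2 : B.filter (fun x : Fin n => (x : ℕ) = k) = ∅ := by
        ext x
        simp only [Finset.mem_filter, Finset.notMem_empty, iff_false]
        rintro ⟨hx, h'⟩
        exact hk (h' ▸ x.2)
      rw [h1, h2]; simp

lemma cnt_fB_n (B : Finset (Fin n)) : cnt (fB B) n = B.card := by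
  rw [cnt_fB]
  congr 1
  apply Finset.filter_true_of_mem
  intro x _
  exact x.2

lemma dom_iff {A B : Finset (Fin n)} :
    (∀ x : Fin n, (B.filter (· ≤ x)).card ≤ (A.filter (· < x)).card) ↔
    (∀ m < n, cnt (fB B) (m + 1) ≤ cnt (fB A) m) := by
  have key : ∀ (m : ℕ) (hm : m < n),
      B.filter (· ≤ (⟨m, hm⟩ : Fin n)) = B.filter (fun x : Fin n => (x : ℕ) < m + 1) ∧
      A.filter (· < (⟨m, hm⟩ : Fin n)) = A.filter (fun x : Fin n => (x : ℕ) < m) := by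
    intro m hm
    constructor
    · ext x
      simp only [Finset.mem_filter, and_congr_right_iff]
      intro _
      rw [Fin.le_def]
      simp only [Fin.val_mk]
      omega
    · ext x
      simp only [Finset.mem_filter, and_congr_right_iff]
      intro _
      rw [Fin.lt_def]
  constructor
  · intro h m hm
    rw [cnt_fB, cnt_fB, ← (key m hm).1, ← (key m hm).2]
    exact h ⟨m, hm⟩
  · intro h x
    have hm : (x : ℕ) < n := x.2
    have h1 := h (x : ℕ) hm
    rw [cnt_fB, cnt_fB, ← (key (x : ℕ) hm).1, ← (key (x : ℕ) hm).2] at h1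
    simpa using h1

def dyckA (n : ℕ) (w : DyckWord) : Finset (Fin n) :=
  univ.filter (fun t => w.toList[2 * (t : ℕ) + 1]? = some U)

def dyckB (n : ℕ) (w : DyckWord) : Finset (Fin n) :=
  univ.filter (fun t => w.toList[2 * (t : ℕ)]? = some D)

lemma fB_dyckA (w : DyckWord) {m : ℕ} (hm : m < n) :
    fB (dyckA n w) m = decide (w.toList[2 * m + 1]? = some U) := by
  simp only [fB, decide_eq_decide]
  constructor
  · rintro ⟨h, hmem⟩
    simpa using (Finset.mem_filter.mp hmem).2
  · intro h
    exact ⟨hm, Finset.mem_filter.mpr ⟨Finset.mem_univ _, by simpa using h⟩⟩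

lemma fB_dyckB (w : DyckWord) {m : ℕ} (hm : m < n) :
    fB (dyckB n w) m = decide (w.toList[2 * m]? = some D) := by
  simp only [fB, decide_eq_decide]
  constructor
  · rintro ⟨h, hmem⟩
    simpa using (Finset.mem_filter.mp hmem).2
  · intro h
    exact ⟨hm, Finset.mem_filter.mpr ⟨Finset.mem_univ _, by simpa using h⟩⟩

lemma reconstruct (w : DyckWord) (hlen : w.toList.length = 2 * n) :
    wl (fB (dyckB n w)) (fB (dyckA n w)) n = w.toList := by
  apply List.ext_getElem?
  intro i
  rcases Nat.lt_or_ge i (2 * n) with hi | hi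
  · rcases Nat.even_or_odd i with ⟨m, hm⟩ | ⟨m, hm⟩
    · have hmn : m < n := by omega
      have h2m : 2 * m < w.toList.length := by omega
      rw [show i = 2 * m by omega, wl_getElem?_even _ _ hmn,
        List.getElem?_eq_getElem h2m, fB_dyckB w hmn, List.getElem?_eq_getElem h2m]
      rcases (w.toList[2 * m]'h2m).dichotomy with h | h <;> rw [h] <;> simp
    · have hmn : m < n := by omega
      have h2m : 2 * m + 1 < w.toList.length := by omega
      rw [show i = 2 * m + 1 by omega, wl_getElem?_odd _ _ hmn,
        List.getElem?_eq_getElem h2m, fB_dyckA w hmn, List.getElem?_eq_getElem h2m]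
      rcases (w.toList[2 * m + 1]'h2m).dichotomy with h | h <;> rw [h] <;> simp
  · rw [List.getElem?_eq_none (by rw [wl_length]; omega),
      List.getElem?_eq_none (by omega)]

lemma wl_UD {A B : Finset (Fin n)} (hc : PairCond A B) :
    (wl (fB B) (fB A) n).count U = (wl (fB B) (fB A) n).count D := by
  have heq : cnt (fB B) n = cnt (fB A) n := by rw [cnt_fB_n, cnt_fB_n]; exact hc.1
  obtain ⟨h1, h2⟩ := wl_count (fB B) (fB A) n
  omega

lemma wl_semilength {A B : Finset (Fin n)} (hc : PairCond A B) :
    (wl (fB B) (fB A) n).count U = n := by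
  have heq : cnt (fB B) n = cnt (fB A) n := by rw [cnt_fB_n, cnt_fB_n]; exact hc.1
  obtain ⟨h1, h2⟩ := wl_count (fB B) (fB A) n
  have := cnt_le (fB A) n
  omega

lemma pairCond_dyck (w : DyckWord) (hsem : w.semilength = n) :
    PairCond (dyckA n w) (dyckB n w) := by
  have hlen : w.toList.length = 2 * n := by
    rw [← w.two_mul_semilength_eq_length, hsem]
  have hrec := reconstruct w hlen
  have hUD := w.count_U_eq_count_D
  have hpre : ∀ i, ((wl (fB (dyckB n w)) (fB (dyckA n w)) n).take i).count D
      ≤ ((wl (fB (dyckB n w)) (fB (dyckA n w)) n).take i).count U := by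
    rw [hrec]; exact w.count_D_le_count_U
  obtain ⟨h1, h2⟩ := wl_count (fB (dyckB n w)) (fB (dyckA n w)) n
  rw [hrec] at h1 h2
  constructor
  · rw [← cnt_fB_n, ← cnt_fB_n]
    have := cnt_le (fB (dyckA n w)) n
    have := cnt_le (fB (dyckB n w)) n
    omega
  · exact dom_iff.mpr (fun m hm => wl_dom_of_dyck hpre hm)

lemma dyckA_eq {A B : Finset (Fin n)} (w : DyckWord)
    (hw : w.toList = wl (fB B) (fB A) n) : dyckA n w = A := by
  ext t
  simp only [dyckA, Finset.mem_filter, Finset.mem_univ, true_and, hw]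
  rw [wl_getElem?_odd _ _ t.2, show (fB A (t : ℕ)) = decide (t ∈ A) from fB_fin A t]
  by_cases h : t ∈ A <;> simp [h]

lemma dyckB_eq {A B : Finset (Fin n)} (w : DyckWord)
    (hw : w.toList = wl (fB B) (fB A) n) : dyckB n w = B := by
  ext t
  simp only [dyckB, Finset.mem_filter, Finset.mem_univ, true_and, hw]
  rw [wl_getElem?_even _ _ t.2, show (fB B (t : ℕ)) = decide (t ∈ B) from fB_fin B t]
  by_cases h : t ∈ B <;> simp [h]

/-- Part 2 equivalence -/
def pairsEquivDyck (n : ℕ) :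
    {AB : Finset (Fin n) × Finset (Fin n) // PairCond AB.1 AB.2} ≃
    {p : DyckWord // p.semilength = n} where
  toFun AB := ⟨⟨wl (fB AB.1.2) (fB AB.1.1) n, wl_UD AB.2,
      wl_dyck_prefix (dom_iff.mp AB.2.2)
        (by rw [cnt_fB_n, cnt_fB_n]; exact AB.2.1)⟩, wl_semilength AB.2⟩
  invFun w := ⟨(dyckA n w.1, dyckB n w.1), pairCond_dyck w.1 w.2⟩
  left_inv AB := Subtype.ext (Prod.ext (dyckA_eq _ rfl) (dyckB_eq _ rfl))
  right_inv w := Subtype.ext (DyckWord.ext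
    (reconstruct w.1 (by rw [← w.1.two_mul_semilength_eq_length, w.2])))


end Part2

end Stmt6

/-- The number of permutations of `{1,…,n}` with no decreasing subsequence of
length 3 (i.e. avoiding the pattern `321`) equals the `n`-th Catalan number
`(2n)! / (n! (n+1)!)`. -/
theorem stmt_6 (n : ℕ) :
    Nat.card {π : Equiv.Perm (Fin n) //
        ¬ ∃ i j k : Fin n, i < j ∧ j < k ∧ π j < π i ∧ π k < π j} =
      (2 * n).factorial / (n.factorial * (n + 1).factorial) := by
  rw [Nat.card_congr ((Stmt6.avEquivPairs n).trans (Stmt6.pairsEquivDyck n)),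
    Nat.card_eq_fintype_card, DyckWord.card_dyckWord_semilength_eq_catalan]
  have hch : Nat.centralBinom n * (n.factorial * n.factorial) = (2 * n).factorial := by
    have h := Nat.choose_mul_factorial_mul_factorial (show n ≤ 2 * n by omega)
    rw [show 2 * n - n = n by omega] at h
    rw [Nat.centralBinom, ← h]
    ring
  have h2 : (2 * n).factorial = catalan n * (n.factorial * (n + 1).factorial) := by
    calc (2 * n).factorial = Nat.centralBinom n * (n.factorial * n.factorial) := hch.symm
    _ = ((n + 1) * catalan n) * (n.factorial * n.factorial) := by
        rw [succ_mul_catalan_eq_centralBinom]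
    _ = catalan n * (n.factorial * ((n + 1) * n.factorial)) := by ring
    _ = catalan n * (n.factorial * (n + 1).factorial) := by rw [Nat.factorial_succ]
  rw [h2, Nat.mul_div_cancel _ (by positivity)]
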